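/- The optimal value J_0^*(x_0) of the switched LQ problem equals min over all switching sequences σ ∈ Ω^N of ½ x_0ᵀ P_σ(0) x_0, where P_σ(0) is obtained from the backward Riccati recursion P_σ(N) = Ψ, P_σ(k) = ρ_{σ(k),k}(P_σ(k+1)). -/

import Mathlib

open Matrix

/-- Riccati map of mode `i` at time `k`. -/
noncomputable def riccatiMap {n nu q : ℕ}
    (A : Fin q → Matrix (Fin n) (Fin n) ℝ)
    (B : Fin q → Matrix (Fin n) (Fin nu) ℝ)
    (Q : ℕ → Matrix (Fin n) (Fin n) ℝ) (R : ℕ → Matrix (Fin nu) (Fin nu) ℝ)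
    (i : Fin q) (k : ℕ) (P : Matrix (Fin n) (Fin n) ℝ) : Matrix (Fin n) (Fin n) ℝ :=
  Q k + (A i)ᵀ * P * A i -
    (A i)ᵀ * P * B i * (R k + (B i)ᵀ * P * B i)⁻¹ * (B i)ᵀ * P * A i

/-- Feedback gain of mode `i` at time `k`. -/
noncomputable def riccatiGain {n nu q : ℕ}
    (A : Fin q → Matrix (Fin n) (Fin n) ℝ)
    (B : Fin q → Matrix (Fin n) (Fin nu) ℝ)
    (R : ℕ → Matrix (Fin nu) (Fin nu) ℝ)
    (i : Fin q) (k : ℕ) (P : Matrix (Fin n) (Fin n) ℝ) : Matrix (Fin nu) (Fin n) ℝ :=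
  (R k + (B i)ᵀ * P * B i)⁻¹ * ((B i)ᵀ * P * A i)

/-- Backward Riccati sequence along a fixed mode sequence `σ`:
`riccatiSeq ... j = P(N - j)`, with `P(N) = Ψ` and `P(k) = ρ_{σ(k),k}(P(k+1))`. -/
noncomputable def riccatiSeq {n nu q : ℕ} (N : ℕ)
    (A : Fin q → Matrix (Fin n) (Fin n) ℝ)
    (B : Fin q → Matrix (Fin n) (Fin nu) ℝ)
    (Q : ℕ → Matrix (Fin n) (Fin n) ℝ) (R : ℕ → Matrix (Fin nu) (Fin nu) ℝ)
    (Ψ : Matrix (Fin n) (Fin n) ℝ) (σ : ℕ → Fin q) : ℕ → Matrix (Fin n) (Fin n) ℝ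
  | 0 => Ψ
  | j + 1 => riccatiMap A B Q R (σ (N - (j + 1))) (N - (j + 1))
      (riccatiSeq N A B Q R Ψ σ j)

section Aux

variable {n nu : ℕ}

private lemma dmul' {m k : ℕ} (M : Matrix (Fin m) (Fin k) ℝ) (a : Fin k → ℝ) (w : Fin m → ℝ) :
    (M *ᵥ a) ⬝ᵥ w = a ⬝ᵥ (Mᵀ *ᵥ w) := by
  rw [dotProduct_comm, dotProduct_mulVec, ← mulVec_transpose, dotProduct_comm]

private lemma psd_conj {m k : ℕ} {P : Matrix (Fin m) (Fin m) ℝ} (hP : P.PosSemidef)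
    (M : Matrix (Fin m) (Fin k) ℝ) : (Mᵀ * P * M).PosSemidef := by
  have := hP.conjTranspose_mul_mul_same M
  rwa [conjTranspose_eq_transpose_of_trivial] at this

private lemma psd_quad {m : ℕ} {P : Matrix (Fin m) (Fin m) ℝ} (hP : P.PosSemidef)
    (x : Fin m → ℝ) : 0 ≤ x ⬝ᵥ P *ᵥ x := by
  simpa using hP.dotProduct_mulVec_nonneg x

variable (Am Qm P : Matrix (Fin n) (Fin n) ℝ) (Bm : Matrix (Fin n) (Fin nu) ℝ)
  (Rm : Matrix (Fin nu) (Fin nu) ℝ)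

private lemma S_posdef (hP : P.PosSemidef) (hR : Rm.PosDef) : (Rm + Bmᵀ * P * Bm).PosDef :=
  hR.add_posSemidef (psd_conj hP Bm)

private lemma SK_eq (hP : P.PosSemidef) (hR : Rm.PosDef) :
    (Rm + Bmᵀ * P * Bm) * ((Rm + Bmᵀ * P * Bm)⁻¹ * (Bmᵀ * P * Am)) = Bmᵀ * P * Am := by
  rw [← Matrix.mul_assoc,
    Matrix.mul_nonsing_inv _ (S_posdef P Bm Rm hP hR).det_pos.ne'.isUnit, Matrix.one_mul]

private lemma completion (hP : P.PosSemidef) (hR : Rm.PosDef) (x : Fin n → ℝ) (u : Fin nu → ℝ) :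
    x ⬝ᵥ Qm *ᵥ x + u ⬝ᵥ Rm *ᵥ u + (Am *ᵥ x + Bm *ᵥ u) ⬝ᵥ P *ᵥ (Am *ᵥ x + Bm *ᵥ u)
      = x ⬝ᵥ (Qm + Amᵀ * P * Am - Amᵀ * P * Bm * (Rm + Bmᵀ * P * Bm)⁻¹ * Bmᵀ * P * Am) *ᵥ x
        + (u + ((Rm + Bmᵀ * P * Bm)⁻¹ * (Bmᵀ * P * Am)) *ᵥ x) ⬝ᵥ
          (Rm + Bmᵀ * P * Bm) *ᵥ (u + ((Rm + Bmᵀ * P * Bm)⁻¹ * (Bmᵀ * P * Am)) *ᵥ x) := by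
  have hPt : Pᵀ = P := by
    have := hP.isHermitian; rwa [← conjTranspose_eq_transpose_of_trivial]
  set S := Rm + Bmᵀ * P * Bm with hS
  set K := S⁻¹ * (Bmᵀ * P * Am) with hK
  have hSt : Sᵀ = S := by
    have := (S_posdef P Bm Rm hP hR).isHermitian
    rwa [← conjTranspose_eq_transpose_of_trivial]
  have hSK : S * K = Bmᵀ * P * Am := SK_eq Am P Bm Rm hP hR
  have hKtS : Kᵀ * S = Amᵀ * P * Bm := by
    rw [← hSt, ← transpose_mul, hSK]
    simp [Matrix.transpose_mul, Matrix.mul_assoc, hPt]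
  simp only [Matrix.add_mulVec, Matrix.sub_mulVec, Matrix.mulVec_add, dotProduct_add,
    add_dotProduct, sub_dotProduct, dotProduct_sub, Matrix.mulVec_mulVec, dmul',
    Matrix.transpose_mul, Matrix.transpose_transpose, hPt, Matrix.mul_assoc]
  have hKtG : Kᵀ * (Bmᵀ * P * Am) = Amᵀ * (P * (Bm * (S⁻¹ * (Bmᵀ * (P * Am))))) := by
    rw [hK]
    simp [Matrix.transpose_mul, Matrix.transpose_nonsing_inv, hSt, hPt, Matrix.mul_assoc]
  rw [hSK, hKtS, hKtG, hS]
  simp only [Matrix.add_mulVec, dotProduct_add, Matrix.mul_assoc]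
  ring

private lemma rho_psd (hQ : Qm.PosSemidef) (hP : P.PosSemidef) (hR : Rm.PosDef) :
    (Qm + Amᵀ * P * Am - Amᵀ * P * Bm * (Rm + Bmᵀ * P * Bm)⁻¹ * Bmᵀ * P * Am).PosSemidef := by
  have hPt : Pᵀ = P := by
    have := hP.isHermitian; rwa [← conjTranspose_eq_transpose_of_trivial]
  have hQt : Qmᵀ = Qm := by
    have := hQ.isHermitian; rwa [← conjTranspose_eq_transpose_of_trivial]
  have hRt : Rmᵀ = Rm := by
    have := hR.isHermitian; rwa [← conjTranspose_eq_transpose_of_trivial]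
  have hSt : (Rm + Bmᵀ * P * Bm)ᵀ = Rm + Bmᵀ * P * Bm := by
    have := (S_posdef P Bm Rm hP hR).isHermitian
    rwa [← conjTranspose_eq_transpose_of_trivial]
  rw [posSemidef_iff_dotProduct_mulVec]
  constructor
  · rw [IsHermitian, conjTranspose_eq_transpose_of_trivial]
    simp only [transpose_sub, transpose_add, transpose_mul, transpose_transpose,
      transpose_nonsing_inv, hPt, hQt, hRt, hSt, Matrix.mul_assoc]
  · intro x
    have hcomp := completion Am Qm P Bm Rm hP hR x
      (-(((Rm + Bmᵀ * P * Bm)⁻¹ * (Bmᵀ * P * Am)) *ᵥ x))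
    rw [neg_add_cancel] at hcomp
    simp only [dotProduct_zero, Matrix.mulVec_zero, add_zero] at hcomp
    have h1 : 0 ≤ x ⬝ᵥ Qm *ᵥ x := psd_quad hQ x
    have h2 : 0 ≤ (-(((Rm + Bmᵀ * P * Bm)⁻¹ * (Bmᵀ * P * Am)) *ᵥ x)) ⬝ᵥ
        Rm *ᵥ (-(((Rm + Bmᵀ * P * Bm)⁻¹ * (Bmᵀ * P * Am)) *ᵥ x)) := psd_quad hR.posSemidef _
    have h3 : 0 ≤ (Am *ᵥ x + Bm *ᵥ (-(((Rm + Bmᵀ * P * Bm)⁻¹ * (Bmᵀ * P * Am)) *ᵥ x))) ⬝ᵥ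
        P *ᵥ (Am *ᵥ x + Bm *ᵥ (-(((Rm + Bmᵀ * P * Bm)⁻¹ * (Bmᵀ * P * Am)) *ᵥ x))) :=
      psd_quad hP _
    have : 0 ≤ x ⬝ᵥ (Qm + Amᵀ * P * Am -
        Amᵀ * P * Bm * (Rm + Bmᵀ * P * Bm)⁻¹ * Bmᵀ * P * Am) *ᵥ x := by linarith
    simpa using this

end Aux

section Main

variable {n nu q : ℕ} {N : ℕ}
  {A : Fin q → Matrix (Fin n) (Fin n) ℝ}
  {B : Fin q → Matrix (Fin n) (Fin nu) ℝ}
  {Q : ℕ → Matrix (Fin n) (Fin n) ℝ} {R : ℕ → Matrix (Fin nu) (Fin nu) ℝ}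
  {Ψ : Matrix (Fin n) (Fin n) ℝ}

private lemma seq_psd (hQ : ∀ k, (Q k).PosSemidef) (hΨ : Ψ.PosSemidef) (hR : ∀ k, (R k).PosDef)
    (σ : ℕ → Fin q) : ∀ j, (riccatiSeq N A B Q R Ψ σ j).PosSemidef := by
  intro j
  induction j with
  | zero => exact hΨ
  | succ j ih => exact rho_psd _ _ _ _ _ (hQ _) ih (hR _)

private lemma seq_congr {σ₁ σ₂ : ℕ → Fin q} (h : ∀ k < N, σ₁ k = σ₂ k) :
    ∀ j ≤ N, riccatiSeq N A B Q R Ψ σ₁ j = riccatiSeq N A B Q R Ψ σ₂ j := by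
  intro j
  induction j with
  | zero => intro _; rfl
  | succ j ih =>
    intro hj
    have hlt : N - (j + 1) < N := by omega
    show riccatiMap A B Q R (σ₁ (N - (j+1))) (N - (j+1)) _
        = riccatiMap A B Q R (σ₂ (N - (j+1))) (N - (j+1)) _
    rw [h _ hlt, ih (by omega)]

/-- Lower bound: cost-to-go from time `N - j` is at least the Riccati value. -/
private lemma lower_bound (hQ : ∀ k, (Q k).PosSemidef) (hΨ : Ψ.PosSemidef)
    (hR : ∀ k, (R k).PosDef)
    (x : ℕ → Fin n → ℝ) (u : ℕ → Fin nu → ℝ) (σ : ℕ → Fin q)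
    (hdyn : ∀ k < N, x (k + 1) = A (σ k) *ᵥ x k + B (σ k) *ᵥ u k) :
    ∀ j ≤ N,
      (1 / 2) * (x (N - j) ⬝ᵥ riccatiSeq N A B Q R Ψ σ j *ᵥ x (N - j))
        ≤ (1 / 2) * (x N ⬝ᵥ Ψ *ᵥ x N) + (1 / 2) *
            ∑ k ∈ Finset.Ico (N - j) N, (x k ⬝ᵥ Q k *ᵥ x k + u k ⬝ᵥ R k *ᵥ u k) := by
  intro j
  induction j with
  | zero => intro _; simp [riccatiSeq]
  | succ j ih =>
    intro hj
    have ihj := ih (by omega)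
    set k := N - (j + 1) with hk
    have hkN : k < N := by omega
    have hk1 : N - j = k + 1 := by omega
    rw [hk1] at ihj
    have hsum : ∑ i ∈ Finset.Ico k N, (x i ⬝ᵥ Q i *ᵥ x i + u i ⬝ᵥ R i *ᵥ u i)
        = (x k ⬝ᵥ Q k *ᵥ x k + u k ⬝ᵥ R k *ᵥ u k) +
          ∑ i ∈ Finset.Ico (k + 1) N, (x i ⬝ᵥ Q i *ᵥ x i + u i ⬝ᵥ R i *ᵥ u i) :=
      Finset.sum_eq_sum_Ico_succ_bot hkN _
    set P := riccatiSeq N A B Q R Ψ σ j with hP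
    have hPpsd : P.PosSemidef := seq_psd hQ hΨ hR σ j
    have hcomp := completion (A (σ k)) (Q k) P (B (σ k)) (R k) hPpsd (hR k) (x k) (u k)
    have hx1 : x (k + 1) = A (σ k) *ᵥ x k + B (σ k) *ᵥ u k := hdyn k hkN
    have hSpos : 0 ≤ (u k + ((R k + (B (σ k))ᵀ * P * B (σ k))⁻¹ * ((B (σ k))ᵀ * P * A (σ k))) *ᵥ x k)
        ⬝ᵥ (R k + (B (σ k))ᵀ * P * B (σ k)) *ᵥ
          (u k + ((R k + (B (σ k))ᵀ * P * B (σ k))⁻¹ * ((B (σ k))ᵀ * P * A (σ k))) *ᵥ x k) :=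
      psd_quad (S_posdef P (B (σ k)) (R k) hPpsd (hR k)).posSemidef _
    have hmap : riccatiSeq N A B Q R Ψ σ (j + 1)
        = Q k + (A (σ k))ᵀ * P * A (σ k) -
          (A (σ k))ᵀ * P * B (σ k) * (R k + (B (σ k))ᵀ * P * B (σ k))⁻¹ * (B (σ k))ᵀ * P * A (σ k) := by
      rfl
    rw [← hmap] at hcomp
    rw [hx1] at ihj
    rw [hsum]
    linarith

/-- Optimal closed-loop trajectory under feedback gains. -/
noncomputable def optTraj {n nu q : ℕ} (N : ℕ)
    (A : Fin q → Matrix (Fin n) (Fin n) ℝ)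
    (B : Fin q → Matrix (Fin n) (Fin nu) ℝ)
    (Q : ℕ → Matrix (Fin n) (Fin n) ℝ) (R : ℕ → Matrix (Fin nu) (Fin nu) ℝ)
    (Ψ : Matrix (Fin n) (Fin n) ℝ) (σ : ℕ → Fin q) (x₀ : Fin n → ℝ) : ℕ → Fin n → ℝ
  | 0 => x₀
  | k + 1 =>
      (A (σ k) - B (σ k) * riccatiGain A B R (σ k) k (riccatiSeq N A B Q R Ψ σ (N - (k + 1))))
        *ᵥ optTraj N A B Q R Ψ σ x₀ k

/-- Optimal feedback control. -/
noncomputable def optCtrl {n nu q : ℕ} (N : ℕ)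
    (A : Fin q → Matrix (Fin n) (Fin n) ℝ)
    (B : Fin q → Matrix (Fin n) (Fin nu) ℝ)
    (Q : ℕ → Matrix (Fin n) (Fin n) ℝ) (R : ℕ → Matrix (Fin nu) (Fin nu) ℝ)
    (Ψ : Matrix (Fin n) (Fin n) ℝ) (σ : ℕ → Fin q) (x₀ : Fin n → ℝ) (k : ℕ) : Fin nu → ℝ :=
  -(riccatiGain A B R (σ k) k (riccatiSeq N A B Q R Ψ σ (N - (k + 1)))
      *ᵥ optTraj N A B Q R Ψ σ x₀ k)

section Main2
variable {n nu q : ℕ} {N : ℕ}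
  {A : Fin q → Matrix (Fin n) (Fin n) ℝ}
  {B : Fin q → Matrix (Fin n) (Fin nu) ℝ}
  {Q : ℕ → Matrix (Fin n) (Fin n) ℝ} {R : ℕ → Matrix (Fin nu) (Fin nu) ℝ}
  {Ψ : Matrix (Fin n) (Fin n) ℝ}

private lemma opt_dyn (σ : ℕ → Fin q) (x₀ : Fin n → ℝ) (k : ℕ) :
    optTraj N A B Q R Ψ σ x₀ (k + 1)
      = A (σ k) *ᵥ optTraj N A B Q R Ψ σ x₀ k + B (σ k) *ᵥ optCtrl N A B Q R Ψ σ x₀ k := by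
  show (A (σ k) - B (σ k) * riccatiGain A B R (σ k) k (riccatiSeq N A B Q R Ψ σ (N - (k + 1))))
        *ᵥ optTraj N A B Q R Ψ σ x₀ k = _
  rw [optCtrl, Matrix.mulVec_neg, Matrix.mulVec_mulVec, Matrix.sub_mulVec]
  ring_nf

private lemma opt_eq (hQ : ∀ k, (Q k).PosSemidef) (hΨ : Ψ.PosSemidef) (hR : ∀ k, (R k).PosDef)
    (σ : ℕ → Fin q) (x₀ : Fin n → ℝ) :
    ∀ j ≤ N,
      (1 / 2) * (optTraj N A B Q R Ψ σ x₀ (N - j) ⬝ᵥ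
          riccatiSeq N A B Q R Ψ σ j *ᵥ optTraj N A B Q R Ψ σ x₀ (N - j))
        = (1 / 2) * (optTraj N A B Q R Ψ σ x₀ N ⬝ᵥ Ψ *ᵥ optTraj N A B Q R Ψ σ x₀ N) + (1 / 2) *
            ∑ k ∈ Finset.Ico (N - j) N,
              (optTraj N A B Q R Ψ σ x₀ k ⬝ᵥ Q k *ᵥ optTraj N A B Q R Ψ σ x₀ k +
                optCtrl N A B Q R Ψ σ x₀ k ⬝ᵥ R k *ᵥ optCtrl N A B Q R Ψ σ x₀ k) := by
  set xx := optTraj N A B Q R Ψ σ x₀ with hxx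
  set uu := optCtrl N A B Q R Ψ σ x₀ with huu
  intro j
  induction j with
  | zero => intro _; simp [riccatiSeq]
  | succ j ih =>
    intro hj
    have ihj := ih (by omega)
    set k := N - (j + 1) with hk
    have hkN : k < N := by omega
    have hk1 : N - j = k + 1 := by omega
    have hidx : N - (k + 1) = j := by omega
    rw [hk1] at ihj
    have hsum : ∑ i ∈ Finset.Ico k N, (xx i ⬝ᵥ Q i *ᵥ xx i + uu i ⬝ᵥ R i *ᵥ uu i)
        = (xx k ⬝ᵥ Q k *ᵥ xx k + uu k ⬝ᵥ R k *ᵥ uu k) +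
          ∑ i ∈ Finset.Ico (k + 1) N, (xx i ⬝ᵥ Q i *ᵥ xx i + uu i ⬝ᵥ R i *ᵥ uu i) :=
      Finset.sum_eq_sum_Ico_succ_bot hkN _
    set P := riccatiSeq N A B Q R Ψ σ j with hP
    have hPpsd : P.PosSemidef := seq_psd hQ hΨ hR σ j
    have hcomp := completion (A (σ k)) (Q k) P (B (σ k)) (R k) hPpsd (hR k) (xx k) (uu k)
    have hu : uu k = -(((R k + (B (σ k))ᵀ * P * B (σ k))⁻¹ * ((B (σ k))ᵀ * P * A (σ k))) *ᵥ xx k) := by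
      rw [huu, optCtrl, hidx, riccatiGain, ← hxx, ← hP]
    have hzero : uu k + ((R k + (B (σ k))ᵀ * P * B (σ k))⁻¹ * ((B (σ k))ᵀ * P * A (σ k))) *ᵥ xx k
        = 0 := by rw [hu]; exact neg_add_cancel _
    rw [hzero] at hcomp
    simp only [dotProduct_zero, Matrix.mulVec_zero, add_zero] at hcomp
    have hdynk : xx (k + 1) = A (σ k) *ᵥ xx k + B (σ k) *ᵥ uu k := opt_dyn σ x₀ k
    have hmap : riccatiSeq N A B Q R Ψ σ (j + 1)
        = Q k + (A (σ k))ᵀ * P * A (σ k) -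
          (A (σ k))ᵀ * P * B (σ k) * (R k + (B (σ k))ᵀ * P * B (σ k))⁻¹ * (B (σ k))ᵀ * P * A (σ k) := by
      rfl
    rw [← hmap] at hcomp
    rw [hdynk] at ihj
    rw [hsum]
    linarith

end Main2

theorem stmt_13 (n nu q N : ℕ) (hq : 0 < q)
    (A : Fin q → Matrix (Fin n) (Fin n) ℝ)
    (B : Fin q → Matrix (Fin n) (Fin nu) ℝ)
    (Q : ℕ → Matrix (Fin n) (Fin n) ℝ) (R : ℕ → Matrix (Fin nu) (Fin nu) ℝ)
    (Ψ : Matrix (Fin n) (Fin n) ℝ)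
    (hQ : ∀ k, (Q k).PosSemidef) (hΨ : Ψ.PosSemidef) (hR : ∀ k, (R k).PosDef)
    (x₀ : Fin n → ℝ) :
    IsLeast
      {c : ℝ | ∃ σ : ℕ → Fin q,
        c = (1 / 2) * (x₀ ⬝ᵥ riccatiSeq N A B Q R Ψ σ N *ᵥ x₀)}
      (sInf {c : ℝ | ∃ (x : ℕ → Fin n → ℝ) (u : ℕ → Fin nu → ℝ) (σ : ℕ → Fin q),
        x 0 = x₀ ∧
        (∀ k < N, x (k + 1) = A (σ k) *ᵥ x k + B (σ k) *ᵥ u k) ∧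
        c = (1 / 2) * (x N ⬝ᵥ Ψ *ᵥ x N) +
          (1 / 2) * ∑ k ∈ Finset.range N,
            (x k ⬝ᵥ Q k *ᵥ x k + u k ⬝ᵥ R k *ᵥ u k)}) := by
  set F : (ℕ → Fin q) → ℝ :=
    fun σ => (1 / 2) * (x₀ ⬝ᵥ riccatiSeq N A B Q R Ψ σ N *ᵥ x₀) with hF
  set Sset : Set ℝ := {c : ℝ | ∃ σ : ℕ → Fin q, c = F σ} with hSset
  set Tset : Set ℝ := {c : ℝ | ∃ (x : ℕ → Fin n → ℝ) (u : ℕ → Fin nu → ℝ) (σ : ℕ → Fin q),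
        x 0 = x₀ ∧
        (∀ k < N, x (k + 1) = A (σ k) *ᵥ x k + B (σ k) *ᵥ u k) ∧
        c = (1 / 2) * (x N ⬝ᵥ Ψ *ᵥ x N) +
          (1 / 2) * ∑ k ∈ Finset.range N,
            (x k ⬝ᵥ Q k *ᵥ x k + u k ⬝ᵥ R k *ᵥ u k)} with hTset
  have i0 : Fin q := ⟨0, hq⟩
  set ext : (Fin N → Fin q) → (ℕ → Fin q) :=
    fun τ k => if h : k < N then τ ⟨k, h⟩ else i0 with hext
  have hsub : Sset ⊆ (fun τ => F (ext τ)) '' Set.univ := by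
    rintro c ⟨σ, rfl⟩
    refine ⟨fun i => σ i.val, trivial, ?_⟩
    have := seq_congr (σ₁ := ext (fun i => σ i.val)) (σ₂ := σ)
      (A := A) (B := B) (Q := Q) (R := R) (Ψ := Ψ)
      (fun k hk => by simp [hext, dif_pos hk]) N le_rfl
    simp only [hF, this]
  have hfin : Sset.Finite := (Set.finite_univ.image _).subset hsub
  have hne : Sset.Nonempty := ⟨F (fun _ => i0), ⟨_, rfl⟩⟩
  have hmem : sInf Sset ∈ Sset := hne.csInf_mem hfin
  have hlbS : ∀ b ∈ Sset, sInf Sset ≤ b := fun b hb => csInf_le hfin.bddBelow hb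
  have hT : IsLeast Tset (sInf Sset) := by
    constructor
    · obtain ⟨σs, hσs⟩ := hmem
      refine ⟨optTraj N A B Q R Ψ σs x₀, optCtrl N A B Q R Ψ σs x₀, σs, rfl,
        fun k _ => opt_dyn σs x₀ k, ?_⟩
      have heq := opt_eq (A := A) (B := B) hQ hΨ hR σs x₀ N le_rfl
      rw [Nat.sub_self] at heq
      rw [hσs, Finset.range_eq_Ico]
      exact heq
    · rintro c ⟨x, u, σ, h0, hdyn, hc⟩
      have hlb := lower_bound hQ hΨ hR x u σ hdyn N le_rfl
      rw [Nat.sub_self, h0, ← Finset.range_eq_Ico] at hlb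
      have hFm : sInf Sset ≤ F σ := hlbS _ ⟨σ, rfl⟩
      rw [hc]
      calc sInf Sset ≤ F σ := hFm
        _ ≤ _ := hlb
  rw [hT.csInf_eq]
  exact ⟨hmem, hlbS⟩
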